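/- Let J be a nonempty finite index set and N, M ∈ ℕ. Let M_u ∈ ℝ^{N×N} be symmetric positive definite, K_u ∈ ℝ^{N×N} symmetric positive semidefinite, and for each k ∈ J let M_k ∈ ℝ^{M×M} be symmetric positive definite, K_k, C_k^e ∈ ℝ^{M×M} symmetric positive semidefinite, B_k ∈ ℝ^{M×N}, and for all j,k ∈ J let C_{kj} ∈ ℝ^{M×M} be symmetric positive semidefinite with C_{kj} = C_{jk}. Let μ_u > 0 and μ_k > 0 satisfy ⟨M_u x, x⟩ ≥ μ_u |x|² for all x ∈ ℝ^N and ⟨M_k y, y⟩ ≥ μ_k |y|² for all y ∈ ℝ^M. Let T > 0, U ∈ C²([0,T]; ℝ^N), P_k ∈ C¹([0,T]; ℝ^M), F ∈ C⁰([0,T]; ℝ^N), G_k ∈ C⁰([0,T]; ℝ^M), and assume for all t ∈ [0,T]: M_u U''(t) + K_u U(t) − Σ_{k∈J} B_kᵀ P_k(t) = F(t) and, for each k ∈ J, M_k P_k'(t) + B_k U'(t) + K_k P_k(t) + Σ_{j∈J} C_{kj}(P_k(t) − P_j(t)) + C_k^e P_k(t) = G_k(t). Define E(t) = ⟨M_u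 U'(t), U'(t)⟩ + ⟨K_u U(t), U(t)⟩ + Σ_{k∈J} ⟨M_k P_k(t), P_k(t)⟩. Then for every t̂ ∈ [0,T]: √(E(t̂)) ≤ √(E(0)) + ∫₀^{t̂} ( μ_u^{-1/2} |F(t)| + Σ_{k∈J} μ_k^{-1/2} |G_k(t)| ) dt, where |·| is the Euclidean norm and ⟨·,·⟩ the Euclidean inner product. -/

import Mathlib

open Matrix

private lemma mpet_hasDerivWithinAt_mulVec_dot {n m : ℕ} (A : Matrix (Fin n) (Fin m) ℝ)
    {f : ℝ → Fin m → ℝ} {g : ℝ → Fin n → ℝ} {f' : Fin m → ℝ} {g' : Fin n → ℝ}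
    {s : Set ℝ} {t : ℝ}
    (hf : HasDerivWithinAt f f' s t) (hg : HasDerivWithinAt g g' s t) :
    HasDerivWithinAt (fun τ => A.mulVec (f τ) ⬝ᵥ g τ)
      (A.mulVec f' ⬝ᵥ g t + A.mulVec (f t) ⬝ᵥ g') s t := by
  have hfc := hasDerivWithinAt_pi.1 hf
  have hgc := hasDerivWithinAt_pi.1 hg
  have h : ∀ i ∈ Finset.univ, HasDerivWithinAt
      (fun τ => (∑ j, A i j * f τ j) * g τ i)
      ((∑ j, A i j * f' j) * g t i + (∑ j, A i j * f t j) * g' i) s t := by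
    intro i _
    exact (HasDerivWithinAt.fun_sum fun j _ => (hfc j).const_mul (A i j)).mul (hgc i)
  have hsum := HasDerivWithinAt.fun_sum h
  refine HasDerivWithinAt.congr_deriv hsum ?_
  simp [Matrix.mulVec, dotProduct, Finset.sum_add_distrib]

private lemma mpet_dot_self_nonneg {n : ℕ} (x : Fin n → ℝ) : 0 ≤ x ⬝ᵥ x :=
  Finset.sum_nonneg fun i _ => mul_self_nonneg (x i)

private lemma mpet_dot_le_sqrt {n : ℕ} (x y : Fin n → ℝ) :
    x ⬝ᵥ y ≤ Real.sqrt (x ⬝ᵥ x) * Real.sqrt (y ⬝ᵥ y) := by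
  have h := Finset.sum_mul_sq_le_sq_mul_sq Finset.univ x y
  calc x ⬝ᵥ y ≤ |x ⬝ᵥ y| := le_abs_self _
    _ = Real.sqrt ((x ⬝ᵥ y) ^ 2) := (Real.sqrt_sq_eq_abs _).symm
    _ ≤ Real.sqrt ((x ⬝ᵥ x) * (y ⬝ᵥ y)) := by
        apply Real.sqrt_le_sqrt
        simpa [dotProduct, sq, Finset.mul_sum, Finset.sum_mul, mul_pow] using h
    _ = _ := Real.sqrt_mul (mpet_dot_self_nonneg x) _

private lemma mpet_symm_swap {n : ℕ} {A : Matrix (Fin n) (Fin n) ℝ} (hA : Aᵀ = A)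
    (x y : Fin n → ℝ) : A.mulVec x ⬝ᵥ y = A.mulVec y ⬝ᵥ x := by
  rw [dotProduct_comm, Matrix.dotProduct_mulVec, ← Matrix.mulVec_transpose, hA]

private lemma mpet_psd_nonneg {n : ℕ} {A : Matrix (Fin n) (Fin n) ℝ} (hA : A.PosSemidef)
    (x : Fin n → ℝ) : 0 ≤ A.mulVec x ⬝ᵥ x := by
  have h := hA.dotProduct_mulVec_nonneg x
  simpa [dotProduct_comm] using h

private lemma mpet_herm_symm {n : ℕ} {A : Matrix (Fin n) (Fin n) ℝ} (hA : A.IsHermitian) :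
    Aᵀ = A := by
  rw [← Matrix.conjTranspose_eq_transpose_of_trivial]; exact hA

private lemma mpet_transpose_dot {n m : ℕ} (B : Matrix (Fin m) (Fin n) ℝ)
    (p : Fin m → ℝ) (u : Fin n → ℝ) :
    Bᵀ.mulVec p ⬝ᵥ u = B.mulVec u ⬝ᵥ p := by
  rw [Matrix.mulVec_transpose, ← Matrix.dotProduct_mulVec, dotProduct_comm]

private lemma mpet_sum_dot {ι : Type} [Fintype ι] {n : ℕ} (v : ι → Fin n → ℝ) (w : Fin n → ℝ) :
    (∑ k, v k) ⬝ᵥ w = ∑ k, v k ⬝ᵥ w := by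
  simp only [dotProduct, Finset.sum_apply, Finset.sum_mul]
  exact Finset.sum_comm

/-- Stability estimate (Theorem 1 of the paper) for the semi-discrete dynamic
MPET system in algebraic form: for every `tHat ∈ [0,T]`,
`√E(tHat) ≤ √E(0) + ∫₀^{tHat} (μ_u^{-1/2} |F(t)| + ∑_k μ_k^{-1/2} |G_k(t)|) dt`,
where `|·|` is the Euclidean norm (so `|x| = √(x ⬝ᵥ x)`). -/
theorem mpet_semidiscrete_stability
    (J : Type) [Fintype J] [Nonempty J] (N M : ℕ)
    (Mu : Matrix (Fin N) (Fin N) ℝ) (hMu : Mu.PosDef)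
    (Ku : Matrix (Fin N) (Fin N) ℝ) (hKu : Ku.PosSemidef)
    (Mk : J → Matrix (Fin M) (Fin M) ℝ) (hMk : ∀ k, (Mk k).PosDef)
    (Kk : J → Matrix (Fin M) (Fin M) ℝ) (hKk : ∀ k, (Kk k).PosSemidef)
    (Ce : J → Matrix (Fin M) (Fin M) ℝ) (hCe : ∀ k, (Ce k).PosSemidef)
    (B : J → Matrix (Fin M) (Fin N) ℝ)
    (C : J → J → Matrix (Fin M) (Fin M) ℝ) (hC : ∀ k j, (C k j).PosSemidef)
    (hCsym : ∀ k j, C k j = C j k)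
    (μu : ℝ) (hμu : 0 < μu) (μ : J → ℝ) (hμ : ∀ k, 0 < μ k)
    (hMuCoer : ∀ x : Fin N → ℝ, μu * (x ⬝ᵥ x) ≤ Mu.mulVec x ⬝ᵥ x)
    (hMkCoer : ∀ k, ∀ y : Fin M → ℝ, μ k * (y ⬝ᵥ y) ≤ (Mk k).mulVec y ⬝ᵥ y)
    (T : ℝ) (hT : 0 < T)
    (U U' U'' : ℝ → Fin N → ℝ)
    (P P' : J → ℝ → Fin M → ℝ)
    (F : ℝ → Fin N → ℝ) (G : J → ℝ → Fin M → ℝ)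
    (hU : ∀ t ∈ Set.Icc 0 T, HasDerivWithinAt U (U' t) (Set.Icc 0 T) t)
    (hU' : ∀ t ∈ Set.Icc 0 T, HasDerivWithinAt U' (U'' t) (Set.Icc 0 T) t)
    (hU'' : ContinuousOn U'' (Set.Icc 0 T))
    (hP : ∀ k, ∀ t ∈ Set.Icc 0 T, HasDerivWithinAt (P k) (P' k t) (Set.Icc 0 T) t)
    (hP' : ∀ k, ContinuousOn (P' k) (Set.Icc 0 T))
    (hF : ContinuousOn F (Set.Icc 0 T))
    (hG : ∀ k, ContinuousOn (G k) (Set.Icc 0 T))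
    (heq1 : ∀ t ∈ Set.Icc 0 T,
      Mu.mulVec (U'' t) + Ku.mulVec (U t) - ∑ k, (B k)ᵀ.mulVec (P k t) = F t)
    (heq2 : ∀ k, ∀ t ∈ Set.Icc 0 T,
      (Mk k).mulVec (P' k t) + (B k).mulVec (U' t) + (Kk k).mulVec (P k t)
        + (∑ j, (C k j).mulVec (P k t - P j t)) + (Ce k).mulVec (P k t) = G k t)
    (E : ℝ → ℝ)
    (hE : ∀ t, E t = Mu.mulVec (U' t) ⬝ᵥ U' t + Ku.mulVec (U t) ⬝ᵥ U t
      + ∑ k, (Mk k).mulVec (P k t) ⬝ᵥ P k t)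
    (tHat : ℝ) (htHat : tHat ∈ Set.Icc 0 T) :
    Real.sqrt (E tHat) ≤ Real.sqrt (E 0) +
      ∫ t in (0:ℝ)..tHat,
        ((Real.sqrt μu)⁻¹ * Real.sqrt (F t ⬝ᵥ F t)
          + ∑ k, (Real.sqrt (μ k))⁻¹ * Real.sqrt (G k t ⬝ᵥ G k t)) := by
  have ht0 : (0:ℝ) ≤ tHat := htHat.1
  have htT : tHat ≤ T := htHat.2
  set s : Set ℝ := Set.Icc 0 T with hs
  have h0s : (0:ℝ) ∈ s := ⟨le_rfl, hT.le⟩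
  have htHs : tHat ∈ s := htHat
  set φ : ℝ → ℝ := fun t => ((Real.sqrt μu)⁻¹ * Real.sqrt (F t ⬝ᵥ F t)
      + ∑ k, (Real.sqrt (μ k))⁻¹ * Real.sqrt (G k t ⬝ᵥ G k t)) with hφdef
  have hφ0 : ∀ t, 0 ≤ φ t := by
    intro t
    have : ∀ k ∈ Finset.univ, (0:ℝ) ≤ (Real.sqrt (μ k))⁻¹ * Real.sqrt (G k t ⬝ᵥ G k t) :=
      fun k _ => mul_nonneg (inv_nonneg.2 (Real.sqrt_nonneg _)) (Real.sqrt_nonneg _)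
    exact add_nonneg (mul_nonneg (inv_nonneg.2 (Real.sqrt_nonneg _)) (Real.sqrt_nonneg _))
      (Finset.sum_nonneg this)
  have hφcont : ContinuousOn φ s := by
    have hdot : ∀ (n : ℕ) (f : ℝ → Fin n → ℝ), ContinuousOn f s →
        ContinuousOn (fun t => f t ⬝ᵥ f t) s := by
      intro n f hf
      have : ∀ i : Fin n, ContinuousOn (fun t => f t i * f t i) s := fun i =>
        ((continuous_apply i).comp_continuousOn hf).mul ((continuous_apply i).comp_continuousOn hf)
      simpa [dotProduct] using continuousOn_finset_sum Finset.univ (fun i (_ : i ∈ Finset.univ) => this i)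
    apply ContinuousOn.add
    · exact continuousOn_const.mul (Real.continuous_sqrt.comp_continuousOn (hdot N F hF))
    · exact continuousOn_finset_sum Finset.univ fun k _ =>
        continuousOn_const.mul (Real.continuous_sqrt.comp_continuousOn (hdot M (G k) (hG k)))
  have hEnn : ∀ t, 0 ≤ E t := by
    intro t
    rw [hE t]
    refine add_nonneg (add_nonneg (mpet_psd_nonneg hMu.posSemidef _) (mpet_psd_nonneg hKu _)) ?_
    exact Finset.sum_nonneg fun k _ => mpet_psd_nonneg (hMk k).posSemidef _
  set e' : ℝ → ℝ := fun t => 2 * (Mu.mulVec (U'' t) ⬝ᵥ U' t) + 2 * (Ku.mulVec (U t) ⬝ᵥ U' t)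
      + ∑ k, 2 * ((Mk k).mulVec (P' k t) ⬝ᵥ P k t) with he'def
  have hEexp : E = fun t => Mu.mulVec (U' t) ⬝ᵥ U' t + Ku.mulVec (U t) ⬝ᵥ U t
      + ∑ k, (Mk k).mulVec (P k t) ⬝ᵥ P k t := funext hE
  have hEd : ∀ t ∈ s, HasDerivWithinAt E (e' t) s t := by
    intro t ht
    rw [hEexp]
    have h1 := mpet_hasDerivWithinAt_mulVec_dot Mu (hU' t ht) (hU' t ht)
    have h2 := mpet_hasDerivWithinAt_mulVec_dot Ku (hU t ht) (hU t ht)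
    have h3 := HasDerivWithinAt.fun_sum (fun k (_ : k ∈ Finset.univ) =>
      mpet_hasDerivWithinAt_mulVec_dot (Mk k) (hP k t ht) (hP k t ht))
    have hcomb := (h1.add h2).add h3
    refine HasDerivWithinAt.congr_deriv hcomb ?_
    have sMu : Mu *ᵥ U' t ⬝ᵥ U'' t = Mu *ᵥ U'' t ⬝ᵥ U' t :=
      mpet_symm_swap (mpet_herm_symm hMu.1) _ _
    have sKu : Ku *ᵥ U' t ⬝ᵥ U t = Ku *ᵥ U t ⬝ᵥ U' t :=
      mpet_symm_swap (mpet_herm_symm hKu.1) _ _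
    have sMk : ∀ k, (Mk k) *ᵥ P k t ⬝ᵥ P' k t = (Mk k) *ᵥ P' k t ⬝ᵥ P k t := fun k =>
      mpet_symm_swap (mpet_herm_symm (hMk k).1) _ _
    simp only [sMu, sKu, sMk, two_mul, Finset.sum_add_distrib]
    rw [he'def]
    simp only [two_mul, ← Finset.sum_add_distrib]
  have hbound : ∀ t ∈ s, e' t ≤ 2 * (φ t * Real.sqrt (E t)) := by
    intro t ht
    have h1 : Mu.mulVec (U'' t) ⬝ᵥ U' t
        = F t ⬝ᵥ U' t - Ku.mulVec (U t) ⬝ᵥ U' t + ∑ k, (B k).mulVec (U' t) ⬝ᵥ P k t := by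
      have e1 : Mu *ᵥ U'' t = F t - Ku *ᵥ U t + ∑ k, (B k)ᵀ *ᵥ P k t := by
        rw [← heq1 t ht]; abel
      rw [e1, add_dotProduct, sub_dotProduct, mpet_sum_dot]
      congr 1
      exact Finset.sum_congr rfl fun k _ => mpet_transpose_dot (B k) _ _
    have h2 : ∀ k, (Mk k).mulVec (P' k t) ⬝ᵥ P k t
        = G k t ⬝ᵥ P k t - (B k).mulVec (U' t) ⬝ᵥ P k t - (Kk k).mulVec (P k t) ⬝ᵥ P k t
          - (∑ j, (C k j).mulVec (P k t - P j t) ⬝ᵥ P k t) - (Ce k).mulVec (P k t) ⬝ᵥ P k t := by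
      intro k
      have e2 : (Mk k) *ᵥ P' k t = G k t - (B k) *ᵥ U' t - (Kk k) *ᵥ P k t
          - (∑ j, (C k j) *ᵥ (P k t - P j t)) - (Ce k) *ᵥ P k t := by
        rw [← heq2 k t ht]; abel
      rw [e2, sub_dotProduct, sub_dotProduct, sub_dotProduct,
        sub_dotProduct, mpet_sum_dot]
    have hS1 : (0:ℝ) ≤ ∑ k, ((Kk k).mulVec (P k t) ⬝ᵥ P k t + (Ce k).mulVec (P k t) ⬝ᵥ P k t) :=
      Finset.sum_nonneg fun k _ =>
        add_nonneg (mpet_psd_nonneg (hKk k) _) (mpet_psd_nonneg (hCe k) _)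
    have hCS : (0:ℝ) ≤ ∑ k, ∑ j, (C k j).mulVec (P k t - P j t) ⬝ᵥ P k t := by
      set d : J → J → ℝ := fun k j => (C k j).mulVec (P k t - P j t) ⬝ᵥ P k t with hd
      have hswap : ∑ k, ∑ j, d k j = ∑ k, ∑ j, d j k := Finset.sum_comm
      have hpair : ∀ k j, d k j + d j k
          = (C k j).mulVec (P k t - P j t) ⬝ᵥ (P k t - P j t) := by
        intro k j
        have hc : C j k = C k j := (hCsym k j).symm
        simp only [hd, hc, Matrix.mulVec_sub, sub_dotProduct, dotProduct_sub]
        ring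
      have h2S : (∑ k, ∑ j, d k j) + (∑ k, ∑ j, d j k)
          = ∑ k, ∑ j, ((C k j).mulVec (P k t - P j t) ⬝ᵥ (P k t - P j t)) := by
        rw [← Finset.sum_add_distrib]
        refine Finset.sum_congr rfl fun k _ => ?_
        rw [← Finset.sum_add_distrib]
        exact Finset.sum_congr rfl fun j _ => hpair k j
      have hq : (0:ℝ) ≤ ∑ k, ∑ j, ((C k j).mulVec (P k t - P j t) ⬝ᵥ (P k t - P j t)) :=
        Finset.sum_nonneg fun k _ => Finset.sum_nonneg fun j _ => mpet_psd_nonneg (hC k j) _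
      linarith [hswap, h2S, hq]
    have hId : e' t = 2 * (F t ⬝ᵥ U' t) + 2 * (∑ k, G k t ⬝ᵥ P k t)
        - 2 * (∑ k, ((Kk k).mulVec (P k t) ⬝ᵥ P k t + (Ce k).mulVec (P k t) ⬝ᵥ P k t))
        - 2 * (∑ k, ∑ j, (C k j).mulVec (P k t - P j t) ⬝ᵥ P k t) := by
      rw [he'def]
      simp only [h1, h2]
      simp only [mul_sub, mul_add, Finset.sum_sub_distrib, Finset.sum_add_distrib,
        Finset.mul_sum]
      ring
    have hUb : Real.sqrt (U' t ⬝ᵥ U' t) ≤ (Real.sqrt μu)⁻¹ * Real.sqrt (E t) := by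
      have hle : U' t ⬝ᵥ U' t ≤ E t / μu := by
        rw [le_div_iff₀ hμu, mul_comm]
        have h1' := hMuCoer (U' t)
        have h2' : Mu *ᵥ U' t ⬝ᵥ U' t ≤ E t := by
          rw [hE t]
          have hKunn := mpet_psd_nonneg hKu (U t)
          have hMknn : (0:ℝ) ≤ ∑ k, (Mk k).mulVec (P k t) ⬝ᵥ P k t :=
            Finset.sum_nonneg fun k _ => mpet_psd_nonneg (hMk k).posSemidef (P k t)
          linarith
        linarith
      calc Real.sqrt (U' t ⬝ᵥ U' t) ≤ Real.sqrt (E t / μu) := Real.sqrt_le_sqrt hle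
        _ = Real.sqrt (E t) / Real.sqrt μu := Real.sqrt_div (hEnn t) μu
        _ = (Real.sqrt μu)⁻¹ * Real.sqrt (E t) := by rw [div_eq_mul_inv, mul_comm]
    have hPb : ∀ k, Real.sqrt (P k t ⬝ᵥ P k t) ≤ (Real.sqrt (μ k))⁻¹ * Real.sqrt (E t) := by
      intro k
      have hle : P k t ⬝ᵥ P k t ≤ E t / μ k := by
        rw [le_div_iff₀ (hμ k), mul_comm]
        have h1' := hMkCoer k (P k t)
        have h2' : (Mk k) *ᵥ P k t ⬝ᵥ P k t ≤ E t := by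
          rw [hE t]
          have hKunn := mpet_psd_nonneg hKu (U t)
          have hMunn := mpet_psd_nonneg hMu.posSemidef (U' t)
          have hMknn : (Mk k) *ᵥ P k t ⬝ᵥ P k t ≤ ∑ j, (Mk j).mulVec (P j t) ⬝ᵥ P j t :=
            Finset.single_le_sum
              (fun j (_ : j ∈ Finset.univ) => mpet_psd_nonneg (hMk j).posSemidef (P j t))
              (Finset.mem_univ k)
          linarith
        linarith
      calc Real.sqrt (P k t ⬝ᵥ P k t) ≤ Real.sqrt (E t / μ k) := Real.sqrt_le_sqrt hle
        _ = Real.sqrt (E t) / Real.sqrt (μ k) := Real.sqrt_div (hEnn t) (μ k)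
        _ = (Real.sqrt (μ k))⁻¹ * Real.sqrt (E t) := by rw [div_eq_mul_inv, mul_comm]
    have hF1 : F t ⬝ᵥ U' t ≤ ((Real.sqrt μu)⁻¹ * Real.sqrt (F t ⬝ᵥ F t)) * Real.sqrt (E t) := by
      calc F t ⬝ᵥ U' t ≤ Real.sqrt (F t ⬝ᵥ F t) * Real.sqrt (U' t ⬝ᵥ U' t) :=
            mpet_dot_le_sqrt _ _
        _ ≤ Real.sqrt (F t ⬝ᵥ F t) * ((Real.sqrt μu)⁻¹ * Real.sqrt (E t)) :=
            mul_le_mul_of_nonneg_left hUb (Real.sqrt_nonneg _)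
        _ = _ := by ring
    have hG1 : ∀ k, G k t ⬝ᵥ P k t
        ≤ ((Real.sqrt (μ k))⁻¹ * Real.sqrt (G k t ⬝ᵥ G k t)) * Real.sqrt (E t) := by
      intro k
      calc G k t ⬝ᵥ P k t ≤ Real.sqrt (G k t ⬝ᵥ G k t) * Real.sqrt (P k t ⬝ᵥ P k t) :=
            mpet_dot_le_sqrt _ _
        _ ≤ Real.sqrt (G k t ⬝ᵥ G k t) * ((Real.sqrt (μ k))⁻¹ * Real.sqrt (E t)) :=
            mul_le_mul_of_nonneg_left (hPb k) (Real.sqrt_nonneg _)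
        _ = _ := by ring
    have hsumb : F t ⬝ᵥ U' t + ∑ k, G k t ⬝ᵥ P k t ≤ φ t * Real.sqrt (E t) := by
      simp only [hφdef, add_mul, Finset.sum_mul]
      exact add_le_add hF1 (Finset.sum_le_sum fun k _ => hG1 k)
    linarith [hId, hS1, hCS, hsumb]
  have key : ∀ ε : ℝ, 0 < ε → Real.sqrt (E tHat)
      ≤ Real.sqrt (E 0 + ε) + ∫ t in (0:ℝ)..tHat, φ t := by
    intro ε hε
    set y : ℝ → ℝ := fun t => Real.sqrt (E t + ε) with hydef
    have hy : ∀ t ∈ s, HasDerivWithinAt y (e' t / (2 * Real.sqrt (E t + ε))) s t := by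
      intro t ht
      have hpos : 0 < E t + ε := by linarith [hEnn t]
      have hsq := Real.hasDerivAt_sqrt (ne_of_gt hpos)
      have hEε : HasDerivWithinAt (fun τ => E τ + ε) (e' t) s t := (hEd t ht).add_const ε
      have hc := hsq.comp_hasDerivWithinAt t hEε
      refine HasDerivWithinAt.congr_deriv hc ?_
      ring
    have hyb : ∀ t ∈ s, e' t / (2 * Real.sqrt (E t + ε)) ≤ φ t := by
      intro t ht
      have hpos : 0 < Real.sqrt (E t + ε) := Real.sqrt_pos.2 (by linarith [hEnn t])
      rw [div_le_iff₀ (by positivity)]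
      have hmon : Real.sqrt (E t) ≤ Real.sqrt (E t + ε) := Real.sqrt_le_sqrt (by linarith)
      have hb := hbound t ht
      nlinarith [hφ0 t, Real.sqrt_nonneg (E t)]
    set ψ : ℝ → ℝ := fun u => ∫ τ in (0:ℝ)..u, φ τ with hψdef
    have hIcc : Set.uIcc (0:ℝ) T = s := by rw [Set.uIcc_of_le hT.le]
    have hφint : MeasureTheory.IntegrableOn φ (Set.uIcc (0:ℝ) T) MeasureTheory.volume := by
      rw [hIcc]; exact hφcont.integrableOn_Icc
    have hψcont : ContinuousOn ψ s := by
      have := intervalIntegral.continuousOn_primitive_interval hφint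
      rwa [hIcc] at this
    have hψd : ∀ t ∈ interior s, HasDerivAt ψ (φ t) t := by
      intro t ht
      rw [hs, interior_Icc] at ht
      have hts : t ∈ s := ⟨ht.1.le, ht.2.le⟩
      have hmem : Set.Icc (0:ℝ) T ∈ nhds t := Icc_mem_nhds ht.1 ht.2
      have hint : IntervalIntegrable φ MeasureTheory.volume 0 t := by
        apply ContinuousOn.intervalIntegrable
        apply hφcont.mono
        rw [Set.uIcc_of_le ht.1.le]
        exact Set.Icc_subset_Icc le_rfl ht.2.le
      refine intervalIntegral.integral_hasDerivAt_right hint ?_ ?_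
      · exact ⟨Set.Icc 0 T, hmem, hφcont.aestronglyMeasurable measurableSet_Icc⟩
      · exact (hφcont t hts).continuousAt hmem
    set g : ℝ → ℝ := fun u => Real.sqrt (E 0 + ε) + ψ u - y u with hgdef
    have hycont : ContinuousOn y s := fun t ht => (hy t ht).continuousWithinAt
    have hgc : ContinuousOn g s := (continuousOn_const.add hψcont).sub hycont
    have hgd : ∀ t ∈ interior s,
        HasDerivAt g (φ t - e' t / (2 * Real.sqrt (E t + ε))) t := by
      intro t ht
      have hts : t ∈ s := interior_subset ht
      have hmem : s ∈ nhds t := by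
        rw [hs, interior_Icc] at ht
        rw [hs]; exact Icc_mem_nhds ht.1 ht.2
      have hyd : HasDerivAt y (e' t / (2 * Real.sqrt (E t + ε))) t :=
        (hy t hts).hasDerivAt hmem
      exact ((hψd t ht).const_add _).sub hyd
    have hmono : MonotoneOn g s := by
      apply monotoneOn_of_deriv_nonneg (by rw [hs]; exact convex_Icc 0 T) hgc
      · intro t ht
        exact (hgd t ht).differentiableAt.differentiableWithinAt
      · intro t ht
        rw [(hgd t ht).deriv]
        have := hyb t (interior_subset ht)
        linarith
    have hg0 : g 0 = 0 := by
      simp [hgdef, hψdef, hydef, intervalIntegral.integral_same]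
    have hgle : g 0 ≤ g tHat := hmono h0s htHs ht0
    have h1 : Real.sqrt (E tHat) ≤ y tHat := Real.sqrt_le_sqrt (by linarith)
    have h2 : y tHat ≤ Real.sqrt (E 0 + ε) + ψ tHat := by
      rw [hgdef] at hgle hg0
      simp only at hgle hg0
      linarith
    calc Real.sqrt (E tHat) ≤ y tHat := h1
      _ ≤ Real.sqrt (E 0 + ε) + ψ tHat := h2
  have hgoal : ∀ δ : ℝ, 0 < δ →
      Real.sqrt (E tHat) ≤ (Real.sqrt (E 0) + ∫ t in (0:ℝ)..tHat, φ t) + δ := by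
    intro δ hδ
    have hk := key (δ ^ 2) (by positivity)
    have hsq : Real.sqrt (E 0 + δ ^ 2) ≤ Real.sqrt (E 0) + δ := by
      have h1 : E 0 + δ ^ 2 ≤ (Real.sqrt (E 0) + δ) ^ 2 := by
        have := Real.sq_sqrt (hEnn 0)
        nlinarith [Real.sqrt_nonneg (E 0)]
      calc Real.sqrt (E 0 + δ ^ 2) ≤ Real.sqrt ((Real.sqrt (E 0) + δ) ^ 2) :=
            Real.sqrt_le_sqrt h1
        _ = Real.sqrt (E 0) + δ := Real.sqrt_sq (by positivity)
    linarith
  exact le_of_forall_pos_le_add hgoal
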